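/- arXiv:1601.02442 — 2 statements merged into one kernel-verified Lean document; each statement's English description precedes it below -/
import Mathlib

section
/- Let c > 1 and 0 ≤ λ ≤ 6, and let u(x) = -(1/c)·ln(sec(c·x)) + 3 + λ for 0 < x < π/(2c). Let x₁ = arccos(e^{(-2-λ)c})/c and x₂ = arccos(e^{(-4-λ)c})/c. Then for every x ∈ [x₁, x₂], |u'(x)| > (1/2)·e^{2c}. -/
open Real

theorem grim_reaper_slope_bound (c lam : ℝ) (hc : 1 < c) (hlam0 : 0 ≤ lam) (hlam6 : lam ≤ 6) :
    ∀ x ∈ Set.Icc (Real.arccos (Real.exp ((-2 - lam) * c)) / c)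
        (Real.arccos (Real.exp ((-4 - lam) * c)) / c),
      (1 / 2) * Real.exp (2 * c) <
        |deriv (fun y : ℝ => -(1 / c) * Real.log (1 / Real.cos (c * y)) + 3 + lam) x| := by
  intro x hx
  have hc0 : (0:ℝ) < c := by linarith
  set a := Real.exp ((-2 - lam) * c) with ha
  set b := Real.exp ((-4 - lam) * c) with hb
  have ha1 : a < 1 := by rw [ha, Real.exp_lt_one_iff]; nlinarith
  have hb1 : b < 1 := by rw [hb, Real.exp_lt_one_iff]; nlinarith
  have ha0 : 0 < a := Real.exp_pos _
  have hb0 : 0 < b := Real.exp_pos _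
  set t := c * x with ht
  obtain ⟨hx1, hx2⟩ := hx
  have ht1 : Real.arccos a ≤ t := by
    rw [div_le_iff₀ hc0] at hx1; rw [ht]; linarith
  have ht2 : t ≤ Real.arccos b := by
    rw [le_div_iff₀ hc0] at hx2; rw [ht]; linarith
  have ht0 : 0 ≤ t := le_trans (Real.arccos_nonneg _) ht1
  have htpi : t ≤ π := le_trans ht2 (Real.arccos_le_pi _)
  have hcos_le : Real.cos t ≤ a := by
    have h := Real.cos_arccos (by linarith : (-1:ℝ) ≤ a) ha1.le
    calc Real.cos t ≤ Real.cos (Real.arccos a) :=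
          Real.strictAntiOn_cos.antitoneOn ⟨Real.arccos_nonneg _, Real.arccos_le_pi _⟩
            ⟨ht0, htpi⟩ ht1
      _ = a := h
  have hcos_ge : b ≤ Real.cos t := by
    have h := Real.cos_arccos (by linarith : (-1:ℝ) ≤ b) hb1.le
    calc b = Real.cos (Real.arccos b) := h.symm
      _ ≤ Real.cos t :=
          Real.strictAntiOn_cos.antitoneOn ⟨ht0, htpi⟩
            ⟨Real.arccos_nonneg _, Real.arccos_le_pi _⟩ ht2
  have hcost : 0 < Real.cos t := lt_of_lt_of_le hb0 hcos_ge
  have hderiv : deriv (fun y : ℝ => -(1 / c) * Real.log (1 / Real.cos (c * y)) + 3 + lam) x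
      = - (Real.sin t / Real.cos t) := by
    have h1 : HasDerivAt (fun y : ℝ => c * y) c x := by
      simpa using (hasDerivAt_id x).const_mul c
    have h3 : HasDerivAt (fun y : ℝ => Real.cos (c * y)) (-Real.sin t * c) x :=
      (Real.hasDerivAt_cos t).comp x h1
    have h4 : HasDerivAt (fun y : ℝ => Real.log (Real.cos (c * y)))
        ((Real.cos t)⁻¹ * (-Real.sin t * c)) x :=
      by have := (Real.hasDerivAt_log (ne_of_gt hcost)).comp x h3; exact this
    have h5 : HasDerivAt (fun y : ℝ => -(1 / c) * Real.log (1 / Real.cos (c * y)) + 3 + lam)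
        (-(1 / c) * (-((Real.cos t)⁻¹ * (-Real.sin t * c)))) x := by
      have heq : (fun y : ℝ => -(1 / c) * Real.log (1 / Real.cos (c * y)) + 3 + lam)
          = (fun y : ℝ => -(1 / c) * (-(Real.log (Real.cos (c * y)))) + 3 + lam) := by
        funext y
        rw [show (1:ℝ)/Real.cos (c*y) = (Real.cos (c*y))⁻¹ from one_div _, Real.log_inv]
      rw [heq]
      exact ((h4.neg.const_mul (-(1/c))).add_const 3).add_const lam
    rw [h5.deriv]
    field_simp
  rw [hderiv]
  have hsin0 : 0 ≤ Real.sin t := Real.sin_nonneg_of_nonneg_of_le_pi ht0 htpi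
  rw [abs_neg, abs_of_nonneg (div_nonneg hsin0 hcost.le)]
  set s := Real.sqrt (1 - Real.exp (-4 : ℝ)) with hs
  have haexp : a ≤ Real.exp (-2 : ℝ) := by
    rw [ha]; apply Real.exp_le_exp.2; nlinarith
  have hsin : s ≤ Real.sin t := by
    rw [Real.sin_eq_sqrt_one_sub_cos_sq ht0 htpi, hs]
    apply Real.sqrt_le_sqrt
    have h4 : Real.exp (-2 : ℝ) ^ 2 = Real.exp (-4 : ℝ) := by
      rw [sq, ← Real.exp_add]; norm_num
    nlinarith [hcost.le]
  have he4 : Real.exp (-4 : ℝ) < 3 / 4 := by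
    have h5 : (5:ℝ) ≤ Real.exp 4 := by
      have := Real.add_one_le_exp (4:ℝ); linarith
    have hprod : Real.exp (-4:ℝ) * Real.exp 4 = 1 := by rw [← Real.exp_add]; norm_num
    nlinarith [Real.exp_pos (-4:ℝ)]
  have hs_half : (1/2 : ℝ) < s := by
    rw [hs]
    have : ((1:ℝ)/2) = Real.sqrt (1/4) := by
      rw [show (1:ℝ)/4 = (1/2)^2 by norm_num, Real.sqrt_sq (by norm_num)]
    rw [this]
    apply Real.sqrt_lt_sqrt (by norm_num)
    linarith
  have hs0 : (0:ℝ) ≤ s := Real.sqrt_nonneg _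
  have h1 : s / a ≤ Real.sin t / Real.cos t :=
    div_le_div₀ hsin0 hsin hcost hcos_le
  have h2 : s * Real.exp (2 * c) ≤ s / a := by
    rw [ha, div_eq_mul_inv, ← Real.exp_neg]
    apply mul_le_mul_of_nonneg_left _ hs0
    apply Real.exp_le_exp.2
    nlinarith
  have h3 : (1/2 : ℝ) * Real.exp (2 * c) < s * Real.exp (2 * c) :=
    mul_lt_mul_of_pos_right hs_half (Real.exp_pos _)
  linarith
end

section
/- Let c > 1 and 0 ≤ λ ≤ 6. Let u(x) = -(1/c)·ln(sec(c·x)) + 3 + λ and g(x) = sin(1/x), both on the interval (0, π/(2c)). Then the graphs of u and g intersect in exactly one point; i.e., there is a unique x ∈ (0, π/(2c)) with u(x) = g(x). -/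
open Real

private lemma grim_aux_cx_mem {c x : ℝ} (hc0 : 0 < c) (hx0 : 0 < x) (hx1 : x < π / (2*c)) :
    0 < c * x ∧ c * x < π / 2 := by
  constructor
  · positivity
  · calc c * x < c * (π/(2*c)) := by exact (mul_lt_mul_iff_right₀ hc0).2 hx1
      _ = π/2 := by field_simp

private lemma grim_aux_deriv (c lam x : ℝ) (hc0 : 0 < c) (hx0 : 0 < x) (hx1 : x < π / (2*c)) :
    HasDerivAt (fun x => -(1 / c) * Real.log (1 / Real.cos (c * x)) + 3 + lam - Real.sin (1 / x))
      (-Real.tan (c*x) + Real.cos (1/x) / x^2) x := by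
  obtain ⟨hm1, hm2⟩ := grim_aux_cx_mem hc0 hx0 hx1
  have hcx : 0 < Real.cos (c*x) := Real.cos_pos_of_mem_Ioo ⟨by linarith, hm2⟩
  have hfun : (fun x => -(1 / c) * Real.log (1 / Real.cos (c * x)) + 3 + lam - Real.sin (1 / x))
      = (fun x => (1/c) * Real.log (Real.cos (c*x)) + 3 + lam - Real.sin x⁻¹) := by
    funext y
    rw [one_div (Real.cos (c*y)), Real.log_inv, one_div y]
    ring
  rw [hfun]
  have hd1 : HasDerivAt (fun y : ℝ => c*y) c x := by simpa using (hasDerivAt_id x).const_mul c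
  have hd3 : HasDerivAt (fun y => Real.log (Real.cos (c*y)))
      ((-Real.sin (c*x) * c) / Real.cos (c*x)) x := hd1.cos.log (ne_of_gt hcx)
  have hd6 : HasDerivAt (fun y : ℝ => Real.sin y⁻¹) (Real.cos x⁻¹ * -(x^2)⁻¹) x :=
    (hasDerivAt_inv (ne_of_gt hx0)).sin
  have := (((hd3.const_mul (1/c)).add_const 3).add_const lam).sub hd6
  refine this.congr_deriv ?_
  rw [Real.tan_eq_sin_div_cos]
  have hx2 : x^2 ≠ 0 := by positivity
  field_simp
  ring

private lemma grim_aux_exp_quarter {s : ℝ} (hs : 2 ≤ s) : Real.exp (-s) < 1/4 := by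
  have h1 : (2:ℝ) < Real.exp 1 := by have := Real.exp_one_gt_d9; linarith
  have hexp2 : (4:ℝ) < Real.exp 2 := by
    have h2 : Real.exp 2 = Real.exp 1 * Real.exp 1 := by rw [← Real.exp_add]; norm_num
    nlinarith
  have h3 : Real.exp (-s) ≤ Real.exp (-2) := Real.exp_le_exp.2 (by linarith)
  have h4 : Real.exp (-2) = (Real.exp 2)⁻¹ := by rw [Real.exp_neg]
  have h5 : (Real.exp 2)⁻¹ < 1/4 := by
    rw [inv_lt_comm₀ (by positivity) (by norm_num)]
    norm_num
    linarith
  rw [h4] at h3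
  linarith

private lemma grim_aux_exp_sq {c s : ℝ} (hc0 : 0 < c) (hs : 2*c ≤ s) :
    (1+c)^2 ≤ Real.exp s := by
  have h1 : 1 + c ≤ Real.exp c := by have := Real.add_one_le_exp c; linarith
  have h2 : Real.exp (2*c) = Real.exp c * Real.exp c := by rw [← Real.exp_add]; ring_nf
  have h3 : Real.exp (2*c) ≤ Real.exp s := Real.exp_le_exp.2 hs
  nlinarith [Real.exp_pos c]

private lemma grim_aux_theta_lb {θ : ℝ} (h0 : 0 ≤ θ) (h1 : θ ≤ π/2)
    (ht : Real.cos θ < 1/4) : 3*π/8 ≤ θ := by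
  have hπpos : 0 < π := Real.pi_pos
  have h2 := Real.mul_le_sin (x := π/2 - θ) (by linarith) (by linarith)
  rw [Real.sin_pi_div_two_sub] at h2
  rw [div_mul_eq_mul_div, div_le_iff₀ hπpos] at h2
  nlinarith [mul_lt_mul_of_pos_right ht hπpos]

private lemma grim_aux_tan_lb {c t : ℝ} (hc : 1 < c) (ht0 : 0 < t) (ht4 : t < 1/4)
    (hinv : (1+c)^2 ≤ 1/t) :
    (9:ℝ)/10 * (1+c)^2 ≤ Real.sqrt (1 - t^2) / t := by
  have hsqrt : (9:ℝ)/10 ≤ Real.sqrt (1 - t^2) := by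
    have h1 : (0:ℝ) ≤ 1 - t^2 := by nlinarith
    nlinarith [Real.sq_sqrt h1, Real.sqrt_nonneg (1 - t^2)]
  have h1 : (1+c)^2 * t ≤ 1 := by
    have h2 := mul_le_mul_of_nonneg_right hinv ht0.le
    rwa [one_div, inv_mul_cancel₀ (ne_of_gt ht0)] at h2
  rw [le_div_iff₀ ht0]
  nlinarith [sq_nonneg (1+c), ht0.le]

private lemma grim_aux_deriv_neg {c x T : ℝ} (hc : 1 < c) (hx0 : 0 < x)
    (hxlb : 9/8 ≤ c*x) (hT : (9:ℝ)/10 * (1+c)^2 ≤ T) :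
    -T + Real.cos (1/x) / x^2 < 0 := by
  have hx2pos : (0:ℝ) < x^2 := by positivity
  have hcos1 : Real.cos (1/x) ≤ 1 := Real.cos_le_one _
  have hcx81 : (81:ℝ)/64 ≤ (c*x)^2 := by nlinarith
  have hc2x2 : c^2 * x^2 = (c*x)^2 := by ring
  have hlt : Real.cos (1/x) / x^2 < T := by
    rw [div_lt_iff₀ hx2pos]
    nlinarith [sq_nonneg x, sq_nonneg c, mul_pos (mul_pos hx2pos (by positivity : (0:ℝ) < c^2)) hx2pos]
  linarith

set_option maxHeartbeats 1000000 in
theorem grim_reaper_meets_sine_curve_once (c lam : ℝ) (hc : 1 < c)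
    (hlam0 : 0 ≤ lam) (hlam6 : lam ≤ 6) :
    ∃! x : ℝ, x ∈ Set.Ioo 0 (π / (2 * c)) ∧
      -(1 / c) * Real.log (1 / Real.cos (c * x)) + 3 + lam = Real.sin (1 / x) := by
  have hc0 : 0 < c := by linarith
  have hcne : c ≠ 0 := ne_of_gt hc0
  have hπ : (3:ℝ) < π := Real.pi_gt_three
  set s1 : ℝ := c * (2 + lam) with hs1def
  set s2 : ℝ := c * (4 + lam) with hs2def
  have hs1pos : 0 < s1 := by positivity
  have hs2pos : 0 < s2 := by positivity
  have hs1ge2 : 2 ≤ s1 := by nlinarith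
  have hs1ge2c : 2*c ≤ s1 := by nlinarith
  have hs12 : s1 < s2 := by nlinarith
  set t1 : ℝ := Real.exp (-s1) with ht1def
  set t2 : ℝ := Real.exp (-s2) with ht2def
  have ht1pos : 0 < t1 := Real.exp_pos _
  have ht2pos : 0 < t2 := Real.exp_pos _
  have ht21 : t2 < t1 := Real.exp_lt_exp.2 (by linarith)
  have ht1lt1 : t1 < 1 := Real.exp_lt_one_iff.2 (by linarith)
  have ht2lt1 : t2 < 1 := lt_trans ht21 ht1lt1
  have ht1q : t1 < 1/4 := grim_aux_exp_quarter hs1ge2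
  have ht1inv : (1+c)^2 ≤ 1/t1 := by
    have h1 : 1/t1 = Real.exp s1 := by rw [ht1def, Real.exp_neg]; field_simp
    rw [h1]; exact grim_aux_exp_sq hc0 hs1ge2c
  set θ1 : ℝ := Real.arccos t1 with hθ1def
  set θ2 : ℝ := Real.arccos t2 with hθ2def
  have hθ1pos : 0 < θ1 := Real.arccos_pos.2 ht1lt1
  have hθ2pos : 0 < θ2 := Real.arccos_pos.2 ht2lt1
  have hθ1lt : θ1 < π/2 := Real.arccos_lt_pi_div_two.2 ht1pos
  have hθ2lt : θ2 < π/2 := Real.arccos_lt_pi_div_two.2 ht2pos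
  have hcosθ1 : Real.cos θ1 = t1 := Real.cos_arccos (by linarith) (le_of_lt ht1lt1)
  have hcosθ2 : Real.cos θ2 = t2 := Real.cos_arccos (by linarith) (le_of_lt ht2lt1)
  have hθ12 : θ1 < θ2 := by
    by_contra hcon
    push_neg at hcon
    have := Real.cos_le_cos_of_nonneg_of_le_pi (le_of_lt hθ2pos) (by linarith) hcon
    rw [hcosθ1, hcosθ2] at this
    linarith
  have hθ1lb : 3*π/8 ≤ θ1 :=
    grim_aux_theta_lb (le_of_lt hθ1pos) (le_of_lt hθ1lt) (by rw [hcosθ1]; exact ht1q)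
  set a : ℝ := θ1 / c with hadef
  set b : ℝ := θ2 / c with hbdef
  have hca : c * a = θ1 := by rw [hadef]; field_simp
  have hcb : c * b = θ2 := by rw [hbdef]; field_simp
  have hapos : 0 < a := by positivity
  have hbpos : 0 < b := by positivity
  have hab : a < b := by
    rw [hadef, hbdef, div_lt_div_iff_of_pos_right hc0]
    exact hθ12
  have hbub : b < π / (2*c) := by
    have h1 : π / (2*c) = (π/2) / c := by ring
    rw [hbdef, h1, div_lt_div_iff_of_pos_right hc0]
    exact hθ2lt
  have haub : a < π / (2*c) := lt_trans hab hbub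
  set h : ℝ → ℝ :=
    fun x => -(1 / c) * Real.log (1 / Real.cos (c * x)) + 3 + lam - Real.sin (1 / x) with hdef
  have hfun : h = (fun x => (1/c) * Real.log (Real.cos (c*x)) + 3 + lam - Real.sin x⁻¹) := by
    funext y
    rw [hdef]
    simp only
    rw [one_div (Real.cos (c*y)), Real.log_inv, one_div y]
    ring
  have hderiv : ∀ x ∈ Set.Ioo 0 (π / (2*c)), HasDerivAt h
      (-Real.tan (c*x) + Real.cos (1/x) / x^2) x := fun x hx =>
    grim_aux_deriv c lam x hc0 hx.1 hx.2
  have hsub : Set.Icc a b ⊆ Set.Ioo 0 (π / (2*c)) := fun x hx =>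
    ⟨lt_of_lt_of_le hapos hx.1, lt_of_le_of_lt hx.2 hbub⟩
  have hcont : ContinuousOn h (Set.Icc a b) := fun x hx =>
    ((hderiv x (hsub hx)).differentiableAt.continuousAt).continuousWithinAt
  have hanti : StrictAntiOn h (Set.Icc a b) := by
    apply strictAntiOn_of_deriv_neg (convex_Icc a b) hcont
    intro x hx
    rw [interior_Icc] at hx
    obtain ⟨hax, hxb⟩ := hx
    have hxI : x ∈ Set.Ioo 0 (π / (2*c)) := hsub ⟨le_of_lt hax, le_of_lt hxb⟩
    rw [(hderiv x hxI).deriv]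
    have hcx1 : θ1 < c * x := by rw [← hca]; exact (mul_lt_mul_iff_right₀ hc0).2 hax
    have hcx2 : c * x < θ2 := by rw [← hcb]; exact (mul_lt_mul_iff_right₀ hc0).2 hxb
    have htanlt : Real.tan θ1 < Real.tan (c*x) :=
      Real.strictMonoOn_tan ⟨by linarith, by linarith⟩ ⟨by linarith, by linarith⟩ hcx1
    have htan1 : Real.tan θ1 = Real.sqrt (1 - t1^2) / t1 := by
      rw [hθ1def, Real.tan_arccos]
    have htanlb : (9:ℝ)/10 * (1+c)^2 ≤ Real.tan θ1 := by
      rw [htan1]; exact grim_aux_tan_lb hc ht1pos ht1q ht1inv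
    exact grim_aux_deriv_neg hc hxI.1 (by linarith) (by linarith)
  have hcosca : Real.cos (c*a) = t1 := by rw [hca, hθ1def]; exact hcosθ1
  have hcoscb : Real.cos (c*b) = t2 := by rw [hcb, hθ2def]; exact hcosθ2
  have hha : h a = 1 - Real.sin a⁻¹ := by
    rw [hfun]
    simp only
    rw [hcosca, ht1def, Real.log_exp, hs1def]
    field_simp
    ring
  have hhb : h b = -1 - Real.sin b⁻¹ := by
    rw [hfun]
    simp only
    rw [hcoscb, ht2def, Real.log_exp, hs2def]
    field_simp
    ring
  have hhanonneg : 0 ≤ h a := by rw [hha]; linarith [Real.sin_le_one a⁻¹]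
  have hhbnonpos : h b ≤ 0 := by rw [hhb]; linarith [Real.neg_one_le_sin b⁻¹]
  obtain ⟨x₀, hx₀mem, hx₀val⟩ := intermediate_value_Icc' (le_of_lt hab) hcont
    (Set.mem_Icc.2 ⟨hhbnonpos, hhanonneg⟩ : (0:ℝ) ∈ Set.Icc (h b) (h a))
  have heq : ∀ y : ℝ, (-(1 / c) * Real.log (1 / Real.cos (c * y)) + 3 + lam = Real.sin (1 / y))
      ↔ h y = 0 := by
    intro y
    rw [hdef]
    simp only
    constructor <;> intro hy <;> linarith
  refine ⟨x₀, ⟨hsub hx₀mem, (heq x₀).2 hx₀val⟩, ?_⟩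
  rintro y ⟨⟨hy0, hy1⟩, hyeq⟩
  have hy : h y = 0 := (heq y).1 hyeq
  have hymem : y ∈ Set.Icc a b := by
    obtain ⟨hm1, hm2⟩ := grim_aux_cx_mem hc0 hy0 hy1
    have hcosypos : 0 < Real.cos (c*y) := Real.cos_pos_of_mem_Ioo ⟨by linarith, hm2⟩
    have hhy : h y = (1/c) * Real.log (Real.cos (c*y)) + 3 + lam - Real.sin y⁻¹ := by
      rw [hfun]
    constructor
    · by_contra hcon
      push_neg at hcon
      have hcy : c * y < θ1 := by rw [← hca]; exact (mul_lt_mul_iff_right₀ hc0).2 hcon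
      have hcoslt : t1 < Real.cos (c*y) := by
        rw [← hcosθ1]
        exact Real.strictAntiOn_cos ⟨by positivity, by linarith⟩
          ⟨le_of_lt hθ1pos, by linarith⟩ hcy
      have hloglt : Real.log t1 < Real.log (Real.cos (c*y)) := Real.log_lt_log ht1pos hcoslt
      rw [ht1def, Real.log_exp] at hloglt
      have h9 : (1/c) * (-s1) = -(2+lam) := by rw [hs1def]; field_simp
      have hgt : -(2 + lam) < (1/c) * Real.log (Real.cos (c*y)) := by
        rw [← h9]
        exact mul_lt_mul_of_pos_left hloglt (by positivity)
      have := Real.sin_le_one y⁻¹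
      rw [hhy] at hy
      linarith
    · by_contra hcon
      push_neg at hcon
      have hcy : θ2 < c * y := by rw [← hcb]; exact (mul_lt_mul_iff_right₀ hc0).2 hcon
      have hcoslt : Real.cos (c*y) < t2 := by
        rw [← hcosθ2]
        exact Real.strictAntiOn_cos ⟨le_of_lt hθ2pos, by linarith⟩
          ⟨by positivity, by linarith⟩ hcy
      have hloglt : Real.log (Real.cos (c*y)) < Real.log t2 := Real.log_lt_log hcosypos hcoslt
      rw [ht2def, Real.log_exp] at hloglt
      have h9 : (1/c) * (-s2) = -(4+lam) := by rw [hs2def]; field_simp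
      have hlt : (1/c) * Real.log (Real.cos (c*y)) < -(4 + lam) := by
        rw [← h9]
        exact mul_lt_mul_of_pos_left hloglt (by positivity)
      have := Real.neg_one_le_sin y⁻¹
      rw [hhy] at hy
      linarith
  exact hanti.injOn hymem hx₀mem (hy.trans hx₀val.symm)
end
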